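/- Let κ be a regular uncountable cardinal, let C be a club in κ, and let u and v be the diagonal unitaries on ℓ²(κ) with diagonals f, g : κ → 𝕋 respectively. Then the following are equivalent: (a) for every x ∈ D[C], u x u* − v x v* ∈ J_κ (i.e., Ad u and Ad v agree on D[C] modulo J_κ); (b) there exists ε < κ such that for every δ ∈ C with δ ≥ ε, the function ξ ↦ f(ξ)·conj(g(ξ)) is constant on the interval [δ, succ_C(δ)). -/

import Mathlib

noncomputable section

open Set

/-- The Hilbert space ℓ²(o): square-summable families indexed by the ordinals below `o`. -/
abbrev L2 (o : Ordinal) : Type := ↥(lp (fun _ : o.ToType => ℂ) 2)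

/-- Bounded linear operators on ℓ²(o). -/
abbrev Bd (o : Ordinal) : Type := L2 o →L[ℂ] L2 o

/-- The ordinal (below `o`) corresponding to an index `i` of ℓ²(o). -/
def ordOf {o : Ordinal} (i : o.ToType) : Ordinal := ((Ordinal.ToType.mk (o := o)).symm i : Ordinal)

/-- `InvOn o S x` : the closed subspace of ℓ²(o) of functions supported on `S`
is an invariant subspace of `x`. -/
def InvOn (o : Ordinal) (S : Set Ordinal) (x : Bd o) : Prop :=
  ∀ f : L2 o, (∀ i : o.ToType, ordOf i ∉ S → f i = 0) →
    ∀ i : o.ToType, ordOf i ∉ S → x f i = 0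

/-- `Dclub o C` (the algebra `D[C]`) is the set of bounded operators `x` on ℓ²(o) such
that for every `α ∈ C`, ℓ²(α) is an invariant subspace of both `x` and its adjoint. -/
def Dclub (o : Ordinal) (C : Set Ordinal) : Set (Bd o) :=
  {x | ∀ α ∈ C, InvOn o (Set.Iio α) x ∧ InvOn o (Set.Iio α) (star x)}

/-- A club in (the ordinal) `o`: a closed unbounded subset of `o`. -/
def IsClubIn (o : Ordinal) (C : Set Ordinal) : Prop :=
  C ⊆ Set.Iio o ∧
  (∀ s ⊆ C, s.Nonempty → sSup s < o → sSup s ∈ C) ∧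
  (∀ α < o, ∃ β ∈ C, α < β)

/-- The least element of `C` strictly above `α`. -/
def clubSucc (C : Set Ordinal) (α : Ordinal) : Ordinal :=
  sInf {β | β ∈ C ∧ α < β}

/-- `memJ κ x` : the (Hilbert space) dimension of the range of `x` is `< κ`;
equivalently (for uncountable κ), the range of `x` is contained in the closure
of a set of cardinality `< κ`. -/
def memJ (κ : Cardinal) {o : Ordinal} (x : Bd o) : Prop :=
  ∃ D : Set (L2 o), Cardinal.mk D < κ ∧ Set.range ⇑x ⊆ closure D

/-- `ConstOn h a b` : the function `h` is constant on the ordinal interval `[a, b)`. -/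
def ConstOn {β : Type*} (h : Ordinal → β) (a b : Ordinal) : Prop :=
  ∀ ξ η : Ordinal, a ≤ ξ → ξ < b → a ≤ η → η < b → h ξ = h η

namespace KeyAux

open scoped ENNReal

local notation "⟪" x ", " y "⟫" => @inner ℂ _ _ x y

variable {o : Ordinal}

/-- basis vector -/
noncomputable def Evec (o : Ordinal) (i : o.ToType) : L2 o := lp.single 2 i (1:ℂ)

lemma Evec_apply (i j : o.ToType) : (Evec o i) j = if j = i then 1 else 0 := by
  by_cases h : j = i
  · subst h; rw [Evec, lp.single_apply_self, if_pos rfl]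
  · rw [Evec, lp.single_apply_ne _ _ _ h, if_neg h]

lemma ordOf_lt (i : o.ToType) : ordOf i < o := (((Ordinal.ToType.mk (o := o).symm)) i).2

lemma ordOf_inj : Function.Injective (ordOf (o := o)) := by
  intro i j h
  have h2 : (Ordinal.ToType.mk (o := o)).symm i = (Ordinal.ToType.mk (o := o)).symm j :=
    Subtype.ext h
  simpa using congrArg (Ordinal.ToType.mk (o := o)) h2

lemma ordOf_idx {β : Ordinal} (h : β < o) :
    ordOf ((Ordinal.ToType.mk (o := o)) ⟨β, h⟩) = β := by
  simp [ordOf]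

lemma inner_Evec (i : o.ToType) (y : L2 o) : ⟪Evec o i, y⟫ = y i := by
  rw [Evec, lp.inner_single_left]
  simp

noncomputable def coordL (o : Ordinal) (i : o.ToType) : L2 o →L[ℂ] ℂ :=
  LinearMap.mkContinuous
    { toFun := fun y => y i
      map_add' := fun y z => by simp only [lp.coeFn_add, Pi.add_apply]
      map_smul' := fun c y => by
        simp only [lp.coeFn_smul, Pi.smul_apply, RingHom.id_apply] }
    1 (fun y => by
      rw [one_mul]
      exact lp.norm_apply_le_norm (by norm_num) y i)

lemma star_apply (T : Bd o) (y : L2 o) (i : o.ToType) :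
    (star T) y i = ⟪T (Evec o i), y⟫ := by
  rw [← inner_Evec i ((star T) y), ContinuousLinearMap.star_eq_adjoint,
    ContinuousLinearMap.adjoint_inner_right]

lemma star_apply_E (T : Bd o) (i j : o.ToType) :
    (star T) (Evec o i) j = (starRingEnd ℂ) ((T (Evec o j)) i) := by
  rw [star_apply]
  simp only [Evec]
  rw [lp.inner_single_right]
  simp


section Diag

variable {f g : Ordinal → ℂ} {u v : Bd o}

lemma diag_E (hu : ∀ (w : L2 o) (i : o.ToType), u w i = f (ordOf i) * w i) (k : o.ToType) :
    u (Evec o k) = f (ordOf k) • Evec o k := by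
  apply lp.ext; funext m
  rw [hu, lp.coeFn_smul, Pi.smul_apply, smul_eq_mul]
  by_cases h : m = k
  · subst h; rfl
  · rw [Evec_apply, if_neg h, mul_zero, mul_zero]

lemma star_diag (hu : ∀ (w : L2 o) (i : o.ToType), u w i = f (ordOf i) * w i)
    (y : L2 o) (k : o.ToType) :
    (star u) y k = (starRingEnd ℂ) (f (ordOf k)) * y k := by
  rw [star_apply, diag_E hu, inner_smul_left, inner_Evec]

lemma star_diag_E (hu : ∀ (w : L2 o) (i : o.ToType), u w i = f (ordOf i) * w i) (j : o.ToType) :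
    (star u) (Evec o j) = (starRingEnd ℂ) (f (ordOf j)) • Evec o j := by
  apply lp.ext; funext m
  rw [star_diag hu, lp.coeFn_smul, Pi.smul_apply, smul_eq_mul]
  by_cases h : m = j
  · subst h; rfl
  · rw [Evec_apply, if_neg h, mul_zero, mul_zero]

lemma d_apply_E (hu : ∀ (w : L2 o) (i : o.ToType), u w i = f (ordOf i) * w i)
    (hv : ∀ (w : L2 o) (i : o.ToType), v w i = g (ordOf i) * w i)
    (x : Bd o) (i j : o.ToType) :
    ((u * x * star u - v * x * star v) (Evec o j)) i
      = (f (ordOf i) * (starRingEnd ℂ) (f (ordOf j))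
          - g (ordOf i) * (starRingEnd ℂ) (g (ordOf j))) * ((x (Evec o j)) i) := by
  have e1 : (u * x * star u) (Evec o j) = u (x ((star u) (Evec o j))) := rfl
  have e2 : (v * x * star v) (Evec o j) = v (x ((star v) (Evec o j))) := rfl
  have h1 : ((u * x * star u) (Evec o j)) i
      = f (ordOf i) * ((starRingEnd ℂ) (f (ordOf j)) * (x (Evec o j)) i) := by
    rw [e1, star_diag_E hu j, map_smul, hu, lp.coeFn_smul, Pi.smul_apply, smul_eq_mul]
  have h2 : ((v * x * star v) (Evec o j)) i
      = g (ordOf i) * ((starRingEnd ℂ) (g (ordOf j)) * (x (Evec o j)) i) := by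
    rw [e2, star_diag_E hv j, map_smul, hv, lp.coeFn_smul, Pi.smul_apply, smul_eq_mul]
  rw [ContinuousLinearMap.sub_apply, lp.coeFn_sub, Pi.sub_apply, h1, h2]
  ring

end Diag

lemma unit_cross {a b c d : ℂ} (ha : ‖a‖ = 1) (hb : ‖b‖ = 1)
    (hc : ‖c‖ = 1) (hd : ‖d‖ = 1)
    (h : a * (starRingEnd ℂ) c = b * (starRingEnd ℂ) d) :
    a * (starRingEnd ℂ) b = c * (starRingEnd ℂ) d := by
  have hb0 : b ≠ 0 := fun h0 => by simp [h0] at hb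
  have hc0 : c ≠ 0 := fun h0 => by simp [h0] at hc
  have hd0 : d ≠ 0 := fun h0 => by simp [h0] at hd
  have hbinv : (starRingEnd ℂ) b = b⁻¹ :=
    eq_inv_of_mul_eq_one_right (by rw [Complex.mul_conj, ← Complex.sq_norm, hb]; norm_num)
  have hcinv : (starRingEnd ℂ) c = c⁻¹ :=
    eq_inv_of_mul_eq_one_right (by rw [Complex.mul_conj, ← Complex.sq_norm, hc]; norm_num)
  have hdinv : (starRingEnd ℂ) d = d⁻¹ :=
    eq_inv_of_mul_eq_one_right (by rw [Complex.mul_conj, ← Complex.sq_norm, hd]; norm_num)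
  rw [hcinv, hdinv] at h
  rw [hbinv, hdinv]
  field_simp at h ⊢
  linear_combination h

lemma ratApprox (z : ℂ) {θ : ℝ} (hθ : 0 < θ) :
    ∃ q : ℚ × ℚ, ‖z - ((q.1 : ℂ) + (q.2 : ℂ) * Complex.I)‖ < θ := by
  obtain ⟨q1, hq1⟩ := exists_rat_near z.re (by linarith : (0:ℝ) < θ/2)
  obtain ⟨q2, hq2⟩ := exists_rat_near z.im (by linarith : (0:ℝ) < θ/2)
  refine ⟨(q1, q2), ?_⟩
  have hre : (z - ((q1 : ℂ) + (q2 : ℂ) * Complex.I)).re = z.re - q1 := by simp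
  have him : (z - ((q1 : ℂ) + (q2 : ℂ) * Complex.I)).im = z.im - q2 := by simp
  calc ‖z - ((q1 : ℂ) + (q2 : ℂ) * Complex.I)‖
      ≤ |(z - ((q1 : ℂ) + (q2 : ℂ) * Complex.I)).re|
        + |(z - ((q1 : ℂ) + (q2 : ℂ) * Complex.I)).im| :=
        Complex.norm_le_abs_re_add_abs_im _
    _ = |z.re - q1| + |z.im - q2| := by rw [hre, him]
    _ < θ/2 + θ/2 := add_lt_add hq1 hq2
    _ = θ := by ring

lemma single_zero' (i : o.ToType) : (lp.single 2 i (0:ℂ) : L2 o) = 0 := by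
  apply lp.ext; funext m
  by_cases h : m = i
  · subst h; rw [lp.single_apply_self]; simp [lp.coeFn_zero]
  · rw [lp.single_apply_ne _ _ _ h]; simp [lp.coeFn_zero]

lemma single_eq_smul (j : o.ToType) (c : ℂ) : (lp.single 2 j c : L2 o) = c • Evec o j := by
  rw [Evec, ← lp.single_smul, smul_eq_mul, mul_one]

lemma single_sub (i : o.ToType) (a b : ℂ) :
    (lp.single 2 i (a - b) : L2 o) = (lp.single 2 i a : L2 o) - lp.single 2 i b := by
  apply lp.ext; funext m
  rw [lp.coeFn_sub, Pi.sub_apply]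
  by_cases h : m = i
  · subst h; rw [lp.single_apply_self, lp.single_apply_self, lp.single_apply_self]
  · rw [lp.single_apply_ne _ _ _ h, lp.single_apply_ne _ _ _ h, lp.single_apply_ne _ _ _ h,
      sub_zero]


/-- rational finite combinations supported below ε' -/
noncomputable def Tmap (o : Ordinal) (e : Ordinal)
    (l : List ({i : o.ToType // ordOf i < e} × ℚ × ℚ)) : L2 o :=
  (l.map fun p => (((p.2.1 : ℂ)) + (p.2.2 : ℂ) * Complex.I) • Evec o p.1.1).sum

lemma dense_small (e : Ordinal) (w : L2 o) (hw : ∀ i : o.ToType, ¬ ordOf i < e → w i = 0) :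
    w ∈ closure (Set.range (Tmap o e)) := by
  classical
  rw [Metric.mem_closure_iff]
  intro η hη
  have hsum := lp.hasSum_single (E := fun _ : o.ToType => ℂ) ENNReal.ofNat_ne_top w
  obtain ⟨s₀, hs₀⟩ : ∃ s₀ : Finset o.ToType,
      dist (∑ i ∈ s₀, (lp.single 2 i (w i) : L2 o)) w < η/2 := by
    have h1 := Metric.tendsto_nhds.1 hsum (η/2) (by linarith)
    rcases Filter.eventually_atTop.1 h1 with ⟨s₀, h⟩
    exact ⟨s₀, h s₀ le_rfl⟩
  set s₁ := s₀.filter (fun i => ordOf i < e) with hs₁def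
  have hsum_eq : ∑ i ∈ s₀, (lp.single 2 i (w i) : L2 o)
      = ∑ i ∈ s₁, (lp.single 2 i (w i) : L2 o) := by
    rw [hs₁def]
    refine (Finset.sum_filter_of_ne ?_).symm
    intro i _ hne
    by_contra hlt
    exact hne (by rw [hw i hlt, single_zero'])
  set n := s₁.card with hn
  set θ := η / (2 * (n + 1)) with hθ
  have hθpos : 0 < θ := by
    rw [hθ]; positivity
  choose qf hqf using fun i : o.ToType => ratApprox (w i) hθpos
  have hmem : ∀ i ∈ s₁, ordOf i < e := fun i hi => (Finset.mem_filter.1 hi).2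
  refine ⟨Tmap o e (s₁.attach.toList.map
    (fun i => (⟨i.1, hmem i.1 i.2⟩, qf i.1))), ⟨_, rfl⟩, ?_⟩
  have hTl : Tmap o e (s₁.attach.toList.map (fun i => (⟨i.1, hmem i.1 i.2⟩, qf i.1)))
      = ∑ i ∈ s₁, (((qf i).1 : ℂ) + ((qf i).2 : ℂ) * Complex.I) • Evec o i := by
    rw [Tmap, List.map_map]
    rw [show ((fun p : {i : o.ToType // ordOf i < e} × ℚ × ℚ =>
        (((p.2.1 : ℂ)) + (p.2.2 : ℂ) * Complex.I) • Evec o p.1.1) ∘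
        (fun i : {x // x ∈ s₁} => ((⟨i.1, hmem i.1 i.2⟩ : {i : o.ToType // ordOf i < e}), qf i.1)))
      = (fun i : {x // x ∈ s₁} => (((qf i.1).1 : ℂ) + ((qf i.1).2 : ℂ) * Complex.I) • Evec o i.1)
      from rfl]
    rw [show (List.map (fun i : {x // x ∈ s₁} =>
        (((qf i.1).1 : ℂ) + ((qf i.1).2 : ℂ) * Complex.I) • Evec o i.1) s₁.attach.toList).sum
      = ∑ i ∈ s₁.attach, (((qf i.1).1 : ℂ) + ((qf i.1).2 : ℂ) * Complex.I) • Evec o i.1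
      from Finset.sum_map_toList s₁.attach _]
    exact Finset.sum_attach s₁ (fun i => (((qf i).1 : ℂ) + ((qf i).2 : ℂ) * Complex.I) • Evec o i)
  calc dist w (Tmap o e (s₁.attach.toList.map (fun i => (⟨i.1, hmem i.1 i.2⟩, qf i.1))))
      ≤ dist w (∑ i ∈ s₁, (lp.single 2 i (w i) : L2 o))
        + dist (∑ i ∈ s₁, (lp.single 2 i (w i) : L2 o))
          (Tmap o e (s₁.attach.toList.map (fun i => (⟨i.1, hmem i.1 i.2⟩, qf i.1)))) :=
      dist_triangle _ _ _
    _ < η/2 + η/2 := by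
        refine add_lt_add ?_ ?_
        · rw [← hsum_eq, dist_comm]; exact hs₀
        · rw [hTl, dist_eq_norm]
          have : (∑ i ∈ s₁, (lp.single 2 i (w i) : L2 o))
              - ∑ i ∈ s₁, (((qf i).1 : ℂ) + ((qf i).2 : ℂ) * Complex.I) • Evec o i
              = ∑ i ∈ s₁, (lp.single 2 i
                  (w i - (((qf i).1 : ℂ) + ((qf i).2 : ℂ) * Complex.I)) : L2 o) := by
            rw [← Finset.sum_sub_distrib]
            refine Finset.sum_congr rfl fun i _ => ?_
            rw [single_sub, single_eq_smul i (((qf i).1 : ℂ) + ((qf i).2 : ℂ) * Complex.I)]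
          rw [this]
          have hb : ∀ i ∈ s₁,
              ‖(lp.single 2 i (w i - (((qf i).1 : ℂ) + ((qf i).2 : ℂ) * Complex.I)) : L2 o)‖ ≤ θ :=
            by
            intro i _
            have hnorm := lp.norm_single (E := fun _ : o.ToType => ℂ) (p := 2)
              (by norm_num : (0:ℝ≥0∞) < 2)
              i (w i - (((qf i).1 : ℂ) + ((qf i).2 : ℂ) * Complex.I))
            rw [hnorm]
            exact le_of_lt (hqf i)
          calc ‖∑ i ∈ s₁, (lp.single 2 i
                  (w i - (((qf i).1 : ℂ) + ((qf i).2 : ℂ) * Complex.I)) : L2 o)‖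
              ≤ ∑ i ∈ s₁, ‖(lp.single 2 i
                  (w i - (((qf i).1 : ℂ) + ((qf i).2 : ℂ) * Complex.I)) : L2 o)‖ :=
              norm_sum_le _ _
            _ ≤ n • θ := Finset.sum_le_card_nsmul _ _ θ hb
            _ = n * θ := nsmul_eq_mul n θ
            _ < (n + 1) * θ := by
                have : (0:ℝ) < θ := hθpos
                nlinarith
            _ = η/2 := by
                rw [hθ]; field_simp
    _ = η := by ring


section Shift

lemma shift_sum_le (t : o.ToType → Option o.ToType)
    (hinj : ∀ i i' j, t i = some j → t i' = some j → i = i') (w : L2 o)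
    (s : Finset o.ToType) :
    ∑ i ∈ s, ‖(t i).elim 0 ⇑w‖ ^ (2 : ℝ≥0∞).toReal ≤ ‖w‖ ^ (2 : ℝ≥0∞).toReal := by
  classical
  set r := (2 : ℝ≥0∞).toReal with hr
  have h2 : (0:ℝ) < r := by rw [hr]; norm_num
  set s' := s.filter (fun i => (t i).isSome) with hs'
  have h1 : ∑ i ∈ s, ‖(t i).elim 0 ⇑w‖ ^ r = ∑ i ∈ s', ‖(t i).elim 0 ⇑w‖ ^ r := by
    rw [hs']
    refine (Finset.sum_filter_of_ne ?_).symm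
    intro i _ hne
    by_contra hns
    refine hne ?_
    rw [Option.not_isSome_iff_eq_none.1 hns]
    simp [Real.zero_rpow (ne_of_gt h2)]
  have h2' : ∀ i ∈ s', ‖(t i).elim 0 ⇑w‖ ^ r = ‖w ((t i).getD i)‖ ^ r := by
    intro i hi
    obtain ⟨j, hj⟩ := Option.isSome_iff_exists.1 (Finset.mem_filter.1 hi).2
    rw [hj]
    rfl
  have hinj' : ∀ a ∈ s', ∀ b ∈ s', (t a).getD a = (t b).getD b → a = b := by
    intro a ha b hb hab
    obtain ⟨ja, hja⟩ := Option.isSome_iff_exists.1 (Finset.mem_filter.1 ha).2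
    obtain ⟨jb, hjb⟩ := Option.isSome_iff_exists.1 (Finset.mem_filter.1 hb).2
    rw [hja, hjb, Option.getD_some, Option.getD_some] at hab
    subst hab
    exact hinj a b ja hja hjb
  rw [h1, Finset.sum_congr rfl h2',
    ← Finset.sum_image (s := s') (g := fun i => (t i).getD i)
      (f := fun j => ‖w j‖ ^ r) hinj']
  exact lp.sum_rpow_le_norm_rpow h2 w _

/-- the partial-shift operator -/
noncomputable def shiftOp (t : o.ToType → Option o.ToType)
    (hinj : ∀ i i' j, t i = some j → t i' = some j → i = i') : Bd o :=
  LinearMap.mkContinuous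
    { toFun := fun w =>
        (⟨fun i => (t i).elim 0 ⇑w, memℓp_gen' (shift_sum_le t hinj w)⟩ : L2 o)
      map_add' := fun w z => by
        apply lp.ext; funext i
        have : (⇑(w + z) : o.ToType → ℂ) = ⇑w + ⇑z := lp.coeFn_add w z
        show (t i).elim 0 ⇑(w + z) = _
        rw [lp.coeFn_add]
        cases h : t i
        · show (0:ℂ) = _
          have : ((⟨fun i => (t i).elim 0 ⇑w, memℓp_gen' (shift_sum_le t hinj w)⟩ : L2 o)
              + (⟨fun i => (t i).elim 0 ⇑z, memℓp_gen' (shift_sum_le t hinj z)⟩ : L2 o)) i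
              = (t i).elim 0 ⇑w + (t i).elim 0 ⇑z := by
            rw [lp.coeFn_add]; rfl
          rw [this, h]
          simp
        · next j =>
          have : ((⟨fun i => (t i).elim 0 ⇑w, memℓp_gen' (shift_sum_le t hinj w)⟩ : L2 o)
              + (⟨fun i => (t i).elim 0 ⇑z, memℓp_gen' (shift_sum_le t hinj z)⟩ : L2 o)) i
              = (t i).elim 0 ⇑w + (t i).elim 0 ⇑z := by
            rw [lp.coeFn_add]; rfl
          rw [this, h]
          simp
      map_smul' := fun c w => by
        apply lp.ext; funext i
        show (t i).elim 0 ⇑(c • w) = _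
        rw [lp.coeFn_smul]
        have : ((c • (⟨fun i => (t i).elim 0 ⇑w, memℓp_gen' (shift_sum_le t hinj w)⟩ : L2 o))) i
            = c • ((t i).elim 0 ⇑w) := by
          rw [lp.coeFn_smul]; rfl
        rw [RingHom.id_apply, this]
        cases h : t i
        · simp
        · simp }
    1 (fun w => by
      rw [one_mul]
      exact lp.norm_le_of_forall_sum_le (by norm_num) (norm_nonneg w)
        (fun s => shift_sum_le t hinj w s))

lemma shiftOp_apply (t : o.ToType → Option o.ToType)
    (hinj : ∀ i i' j, t i = some j → t i' = some j → i = i') (w : L2 o) (i : o.ToType) :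
    (shiftOp t hinj) w i = (t i).elim 0 ⇑w := rfl

end Shift

end KeyAux

open scoped ENNReal

open KeyAux in
/-- **Lemma (key).** Let κ be regular uncountable, `C` a club in κ, and let `u`, `v` be the
diagonal unitaries on ℓ²(κ) with diagonals `f, g : κ → 𝕋`.  Then `Ad u` and `Ad v` agree on
`D[C]` modulo J_κ if and only if `f ⬝ conj g` is eventually constant on the intervals of `C`. -/
theorem key_lemma (κ : Cardinal.{0}) (hreg : κ.IsRegular) (hunc : Cardinal.aleph0 < κ)
    (C : Set Ordinal) (hC : IsClubIn κ.ord C)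
    (f g : Ordinal → ℂ)
    (hf : ∀ ξ : Ordinal, ‖f ξ‖ = 1) (hg : ∀ ξ : Ordinal, ‖g ξ‖ = 1)
    (u v : Bd κ.ord)
    (hu : ∀ (w : L2 κ.ord) (i : κ.ord.ToType), u w i = f (ordOf i) * w i)
    (hv : ∀ (w : L2 κ.ord) (i : κ.ord.ToType), v w i = g (ordOf i) * w i) :
    (∀ x ∈ Dclub κ.ord C, memJ κ (u * x * star u - v * x * star v)) ↔
      (∃ ε < κ.ord, ∀ δ ∈ C, ε ≤ δ →
        ConstOn (fun ξ => f ξ * star (g ξ)) δ (clubSucc C δ)) := by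
  classical
  have hsucc : ∀ δ : Ordinal, δ < κ.ord → clubSucc C δ ∈ C ∧ δ < clubSucc C δ := by
    intro δ hδ
    obtain ⟨β, hβC, hβ⟩ := hC.2.2 δ hδ
    have hmem := csInf_mem (⟨β, hβC, hβ⟩ : {β | β ∈ C ∧ δ < β}.Nonempty)
    exact ⟨hmem.1, hmem.2⟩
  have hsucc_le : ∀ δ β : Ordinal, β ∈ C → δ < β → clubSucc C δ ≤ β :=
    fun δ β h1 h2 => csInf_le' ⟨h1, h2⟩
  have hle_of : ∀ α δ ξ : Ordinal, α ∈ C → α ≤ ξ → ξ < clubSucc C δ → α ≤ δ := by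
    intro α δ ξ hα h1 h2
    by_contra hcon
    push_neg at hcon
    exact absurd (le_trans (hsucc_le δ α hα hcon) h1) (not_le.2 h2)
  have hblock : ∀ δ δ' ξ : Ordinal, δ ∈ C → δ' ∈ C →
      δ ≤ ξ → ξ < clubSucc C δ → δ' ≤ ξ → ξ < clubSucc C δ' → δ = δ' := by
    intro δ δ' ξ h1 h2 h3 h4 h5 h6
    rcases lt_trichotomy δ δ' with hlt | heq | hlt
    · exact absurd h4 (not_lt.2 (le_trans (hsucc_le δ δ' h2 hlt) h5))
    · exact heq
    · exact absurd h6 (not_lt.2 (le_trans (hsucc_le δ' δ h1 hlt) h3))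
  constructor
  · intro H
    by_contra hcon
    push_neg at hcon
    set P : Ordinal → Prop := fun δ => δ ∈ C ∧
      ¬ConstOn (fun ξ => f ξ * star (g ξ)) δ (clubSucc C δ) with hP
    have hchoice : ∀ δ : Ordinal, ∃ q : Ordinal × Ordinal, P δ →
        (δ ≤ q.1 ∧ q.1 < clubSucc C δ ∧ δ ≤ q.2 ∧ q.2 < clubSucc C δ ∧
          f q.1 * star (g q.1) ≠ f q.2 * star (g q.2)) := by
      intro δ
      by_cases hδ : P δ
      · have h2 := hδ.2
        rw [ConstOn] at h2
        push_neg at h2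
        obtain ⟨ξ, η, h1, h2', h3, h4, h5⟩ := h2
        exact ⟨(ξ, η), fun _ => ⟨h1, h2', h3, h4, h5⟩⟩
      · exact ⟨(0, 0), fun h => absurd h hδ⟩
    choose ΞΗ hΞΗ using hchoice
    have hPfacts : ∀ δ, P δ → δ < κ.ord ∧ clubSucc C δ ∈ C ∧ clubSucc C δ < κ.ord := by
      intro δ hδ
      have h1 : δ < κ.ord := hC.1 hδ.1
      have h2 := (hsucc δ h1).1
      exact ⟨h1, h2, hC.1 h2⟩
    have hΞlt : ∀ δ, P δ → (ΞΗ δ).1 < κ.ord := fun δ hδ =>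
      lt_trans (hΞΗ δ hδ).2.1 (hPfacts δ hδ).2.2
    have hΗlt : ∀ δ, P δ → (ΞΗ δ).2 < κ.ord := fun δ hδ =>
      lt_trans (hΞΗ δ hδ).2.2.2.1 (hPfacts δ hδ).2.2
    have hδuniq : ∀ δ δ', P δ → P δ' → (ΞΗ δ).1 = (ΞΗ δ').1 → δ = δ' := by
      intro δ δ' h h' he
      exact hblock δ δ' (ΞΗ δ).1 h.1 h'.1 (hΞΗ δ h).1 (hΞΗ δ h).2.1
        (by rw [he]; exact (hΞΗ δ' h').1) (by rw [he]; exact (hΞΗ δ' h').2.1)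
    have hδuniqH : ∀ δ δ', P δ → P δ' → (ΞΗ δ).2 = (ΞΗ δ').2 → δ = δ' := by
      intro δ δ' h h' he
      exact hblock δ δ' (ΞΗ δ).2 h.1 h'.1 (hΞΗ δ h).2.2.1 (hΞΗ δ h).2.2.2.1
        (by rw [he]; exact (hΞΗ δ' h').2.2.1) (by rw [he]; exact (hΞΗ δ' h').2.2.2.1)
    set t : κ.ord.ToType → Option κ.ord.ToType := fun i =>
      if hh : ∃ δ, P δ ∧ ordOf i = (ΞΗ δ).1 then
        some ((Ordinal.ToType.mk (o := κ.ord))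
          ⟨(ΞΗ hh.choose).2, hΗlt hh.choose hh.choose_spec.1⟩)
      else none with ht
    have htchar : ∀ (δ : Ordinal) (hδ : P δ) (i : κ.ord.ToType),
        t i = some ((Ordinal.ToType.mk (o := κ.ord)) ⟨(ΞΗ δ).2, hΗlt δ hδ⟩) ↔
          ordOf i = (ΞΗ δ).1 := by
      intro δ hδ i
      constructor
      · intro hti
        have hh : ∃ δ', P δ' ∧ ordOf i = (ΞΗ δ').1 := by
          by_contra hne
          simp only [ht] at hti
          rw [dif_neg hne] at hti
          exact nomatch hti
        simp only [ht] at hti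
        rw [dif_pos hh] at hti
        have hval := congrArg (fun z => (((Ordinal.ToType.mk (o := κ.ord).symm)) z : Ordinal))
          (Option.some.inj hti)
        simp only [OrderIso.symm_apply_apply] at hval
        have hde : hh.choose = δ := hδuniqH _ _ hh.choose_spec.1 hδ hval
        rw [hh.choose_spec.2, hde]
      · intro hio
        have hh : ∃ δ', P δ' ∧ ordOf i = (ΞΗ δ').1 := ⟨δ, hδ, hio⟩
        simp only [ht]
        rw [dif_pos hh]
        have hde : hh.choose = δ :=
          hδuniq _ _ hh.choose_spec.1 hδ (by rw [← hh.choose_spec.2, hio])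
        have hsub : (⟨(ΞΗ hh.choose).2, hΗlt hh.choose hh.choose_spec.1⟩ : Set.Iio κ.ord)
            = ⟨(ΞΗ δ).2, hΗlt δ hδ⟩ :=
          Subtype.ext (show (ΞΗ hh.choose).2 = (ΞΗ δ).2 by rw [hde])
        exact congrArg (fun z => some ((Ordinal.ToType.mk (o := κ.ord)) z)) hsub
    have hinj : ∀ i i' j, t i = some j → t i' = some j → i = i' := by
      intro i i' j h1 h2
      have hh1 : ∃ δ', P δ' ∧ ordOf i = (ΞΗ δ').1 := by
        by_contra hne
        simp only [ht] at h1
        rw [dif_neg hne] at h1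
        exact nomatch h1
      have hh2 : ∃ δ', P δ' ∧ ordOf i' = (ΞΗ δ').1 := by
        by_contra hne
        simp only [ht] at h2
        rw [dif_neg hne] at h2
        exact nomatch h2
      simp only [ht] at h1 h2
      rw [dif_pos hh1] at h1
      rw [dif_pos hh2] at h2
      have h3 := h1.trans h2.symm
      have hval := congrArg (fun z => (((Ordinal.ToType.mk (o := κ.ord).symm)) z : Ordinal))
        (Option.some.inj h3)
      simp only [OrderIso.symm_apply_apply] at hval
      have hde : hh1.choose = hh2.choose :=
        hδuniqH _ _ hh1.choose_spec.1 hh2.choose_spec.1 hval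
      apply ordOf_inj
      rw [hh1.choose_spec.2, hh2.choose_spec.2, hde]
    have hxE : ∀ (δ : Ordinal) (hδ : P δ) (i : κ.ord.ToType),
        (shiftOp t hinj) (Evec κ.ord
          ((Ordinal.ToType.mk (o := κ.ord)) ⟨(ΞΗ δ).2, hΗlt δ hδ⟩)) i
        = if ordOf i = (ΞΗ δ).1 then 1 else 0 := by
      intro δ hδ i
      rw [shiftOp_apply, ]
      rcases hti : t i with _ | k
      · rw [if_neg]
        · rfl
        · intro hio
          have h5 := (htchar δ hδ i).2 hio
          rw [hti] at h5
          exact nomatch h5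
      · show (Evec κ.ord _) k = _
        rw [Evec_apply]
        by_cases hk : k = (Ordinal.ToType.mk (o := κ.ord)) ⟨(ΞΗ δ).2, hΗlt δ hδ⟩
        · rw [if_pos hk, if_pos]
          exact (htchar δ hδ i).1 (by rw [hti, hk])
        · rw [if_neg hk, if_neg]
          intro hio
          have h5 := (htchar δ hδ i).2 hio
          rw [hti] at h5
          exact hk (Option.some.inj h5)
    have hxD : shiftOp t hinj ∈ Dclub κ.ord C := by
      intro α hα
      constructor
      · intro w hw i hi
        rw [shiftOp_apply]
        rcases hti : t i with _ | j
        · rfl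
        · show w j = 0
          have hh : ∃ δ', P δ' ∧ ordOf i = (ΞΗ δ').1 := by
            by_contra hne
            simp only [ht] at hti
            rw [dif_neg hne] at hti
            exact nomatch hti
          have hPδ : P hh.choose := hh.choose_spec.1
          have hjo : ordOf j = (ΞΗ hh.choose).2 := by
            simp only [ht] at hti
            rw [dif_pos hh] at hti
            rw [← Option.some.inj hti, ordOf_idx]
          apply hw
          rw [Set.mem_Iio, hjo]
          have hαξ : α ≤ ordOf i := not_lt.1 (fun hlt => hi (Set.mem_Iio.2 hlt))
          have hαδ : α ≤ hh.choose := hle_of α hh.choose (ΞΗ hh.choose).1 hα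
            (by rw [← hh.choose_spec.2]; exact hαξ) (hΞΗ _ hPδ).2.1
          exact not_lt.2 (le_trans hαδ (hΞΗ _ hPδ).2.2.1)
      · intro w hw j hj
        rw [star_apply]
        by_cases hex : ∃ i0, t i0 = some j
        · obtain ⟨i0, hi0⟩ := hex
          have hxEj : (shiftOp t hinj) (Evec κ.ord j) = Evec κ.ord i0 := by
            apply lp.ext; funext m
            rw [show ((shiftOp t hinj) (Evec κ.ord j)) m = (t m).elim 0 ⇑(Evec κ.ord j)
              from rfl]
            rcases htm : t m with _ | k
            · rw [Evec_apply, if_neg]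
              · rfl
              · intro hmi
                rw [hmi, hi0] at htm
                exact nomatch htm
            · show (Evec κ.ord j) k = _
              rw [Evec_apply, Evec_apply]
              by_cases hkj : k = j
              · subst hkj
                rw [if_pos rfl, if_pos (hinj m i0 k htm hi0)]
              · rw [if_neg hkj, if_neg]
                intro hmi0
                rw [hmi0, hi0] at htm
                exact hkj (Option.some.inj htm).symm
          rw [hxEj, inner_Evec]
          have hh : ∃ δ', P δ' ∧ ordOf i0 = (ΞΗ δ').1 := by
            by_contra hne
            simp only [ht] at hi0
            rw [dif_neg hne] at hi0
            exact nomatch hi0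
          have hPδ : P hh.choose := hh.choose_spec.1
          have hjo : ordOf j = (ΞΗ hh.choose).2 := by
            simp only [ht] at hi0
            rw [dif_pos hh] at hi0
            rw [← Option.some.inj hi0, ordOf_idx]
          apply hw
          rw [Set.mem_Iio, hh.choose_spec.2]
          have hαj : α ≤ ordOf j := not_lt.1 (fun hlt => hj (Set.mem_Iio.2 hlt))
          have hαδ : α ≤ hh.choose := hle_of α hh.choose (ΞΗ hh.choose).2 hα
            (by rw [← hjo]; exact hαj) (hΞΗ _ hPδ).2.2.2.1
          exact not_lt.2 (le_trans hαδ (hΞΗ _ hPδ).1)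
        · have hxEj : (shiftOp t hinj) (Evec κ.ord j) = 0 := by
            apply lp.ext; funext m
            rw [show ((shiftOp t hinj) (Evec κ.ord j)) m = (t m).elim 0 ⇑(Evec κ.ord j)
              from rfl, lp.coeFn_zero]
            rcases htm : t m with _ | k
            · rfl
            · show (Evec κ.ord j) k = _
              rw [Evec_apply, if_neg]
              · rfl
              · intro hkj
                rw [hkj] at htm
                exact hex ⟨m, htm⟩
          rw [hxEj, inner_zero_left]
    obtain ⟨D, hD, hrange⟩ := H (shiftOp t hinj) hxD
    have hEclos : ∀ (δ : Ordinal) (hδ : P δ),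
        Evec κ.ord ((Ordinal.ToType.mk (o := κ.ord)) ⟨(ΞΗ δ).1, hΞlt δ hδ⟩) ∈ closure D := by
      intro δ hδ
      have hcne : f ((ΞΗ δ).1) * (starRingEnd ℂ) (f ((ΞΗ δ).2))
          - g ((ΞΗ δ).1) * (starRingEnd ℂ) (g ((ΞΗ δ).2)) ≠ 0 := by
        intro h0
        rw [sub_eq_zero] at h0
        have h2 := unit_cross (hf (ΞΗ δ).1) (hg (ΞΗ δ).1) (hf (ΞΗ δ).2) (hg (ΞΗ δ).2) h0
        exact (hΞΗ δ hδ).2.2.2.2 (by simpa only [Complex.star_def] using h2)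
      have hoH : ordOf ((Ordinal.ToType.mk (o := κ.ord)) ⟨(ΞΗ δ).2, hΗlt δ hδ⟩) = (ΞΗ δ).2 :=
        ordOf_idx _
      have hdE : (u * (shiftOp t hinj) * star u
          - v * (shiftOp t hinj) * star v)
            (Evec κ.ord ((Ordinal.ToType.mk (o := κ.ord)) ⟨(ΞΗ δ).2, hΗlt δ hδ⟩))
          = (f ((ΞΗ δ).1) * (starRingEnd ℂ) (f ((ΞΗ δ).2))
              - g ((ΞΗ δ).1) * (starRingEnd ℂ) (g ((ΞΗ δ).2)))
            • Evec κ.ord ((Ordinal.ToType.mk (o := κ.ord)) ⟨(ΞΗ δ).1, hΞlt δ hδ⟩) := by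
        apply lp.ext; funext m
        rw [d_apply_E hu hv, lp.coeFn_smul, Pi.smul_apply, smul_eq_mul]
        rw [hxE δ hδ m, Evec_apply, hoH]
        by_cases hm : ordOf m = (ΞΗ δ).1
        · have hmi : m = (Ordinal.ToType.mk (o := κ.ord)) ⟨(ΞΗ δ).1, hΞlt δ hδ⟩ :=
            ordOf_inj (by rw [hm, ordOf_idx])
          rw [if_pos hm, if_pos hmi, hm]
        · rw [if_neg hm, if_neg, mul_zero, mul_zero]
          intro hmi
          exact hm (by rw [hmi, ordOf_idx])
      refine hrange ⟨(f ((ΞΗ δ).1) * (starRingEnd ℂ) (f ((ΞΗ δ).2))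
          - g ((ΞΗ δ).1) * (starRingEnd ℂ) (g ((ΞΗ δ).2)))⁻¹
          • Evec κ.ord ((Ordinal.ToType.mk (o := κ.ord)) ⟨(ΞΗ δ).2, hΗlt δ hδ⟩), ?_⟩
      rw [map_smul, hdE, smul_smul, inv_mul_cancel₀ hcne, one_smul]
    have hEA : ∀ a : {i : κ.ord.ToType // ∃ δ, P δ ∧ ordOf i = (ΞΗ δ).1},
        Evec κ.ord a.1 ∈ closure D := by
      rintro ⟨i, hi⟩
      have hδ := hi.choose_spec.1
      have heq : i = (Ordinal.ToType.mk (o := κ.ord)) ⟨(ΞΗ hi.choose).1, hΞlt _ hδ⟩ :=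
        ordOf_inj (by rw [ordOf_idx]; exact hi.choose_spec.2)
      show Evec κ.ord i ∈ closure D
      rw [heq]
      exact hEclos hi.choose hδ
    have hpick : ∀ a : {i : κ.ord.ToType // ∃ δ, P δ ∧ ordOf i = (ΞΗ δ).1},
        ∃ p : L2 κ.ord, p ∈ D ∧ dist (Evec κ.ord a.1) p < 1/2 := by
      intro a
      rcases Metric.mem_closure_iff.1 (hEA a) (1/2) (by norm_num) with ⟨p, hp1', hp2'⟩
      exact ⟨p, hp1', hp2'⟩
    choose pf hp1 hp2 using hpick
    have hpinj : Function.Injective pf := by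
      intro a b hab
      by_contra hne
      have hne' : a.1 ≠ b.1 := fun h => hne (Subtype.ext h)
      have h1 : (1:ℝ) ≤ dist (Evec κ.ord a.1) (Evec κ.ord b.1) := by
        rw [dist_eq_norm]
        have hcoord := lp.norm_apply_le_norm (by norm_num : (2:ℝ≥0∞) ≠ 0)
          (Evec κ.ord a.1 - Evec κ.ord b.1) a.1
        have hval : (Evec κ.ord a.1 - Evec κ.ord b.1) a.1 = 1 := by
          rw [lp.coeFn_sub, Pi.sub_apply, Evec_apply, Evec_apply,
            if_pos rfl, if_neg hne', sub_zero]
        rw [hval] at hcoord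
        simpa using hcoord
      have h2 : dist (Evec κ.ord a.1) (Evec κ.ord b.1) < 1 := by
        calc dist (Evec κ.ord a.1) (Evec κ.ord b.1)
            ≤ dist (Evec κ.ord a.1) (pf a) + dist (pf a) (Evec κ.ord b.1) :=
            dist_triangle _ _ _
          _ < 1/2 + 1/2 := by
              refine add_lt_add (hp2 a) ?_
              rw [hab, dist_comm]
              exact hp2 b
          _ = 1 := by norm_num
      exact absurd h1 (not_le.2 h2)
    have hAD : Cardinal.mk {i : κ.ord.ToType // ∃ δ, P δ ∧ ordOf i = (ΞΗ δ).1}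
        ≤ Cardinal.mk D := by
      refine Cardinal.mk_le_of_injective
        (f := fun a => (⟨pf a, hp1 a⟩ : D)) ?_
      intro a b hab
      exact hpinj (congrArg Subtype.val hab)
    have hAκ : Cardinal.mk {i : κ.ord.ToType // ∃ δ, P δ ∧ ordOf i = (ΞΗ δ).1} < κ :=
      lt_of_le_of_lt hAD hD
    have hsup := Cardinal.iSup_lt_ord_of_isRegular
      (f := fun a : {i : κ.ord.ToType // ∃ δ, P δ ∧ ordOf i = (ΞΗ δ).1} => ordOf a.1)
      hreg hAκ (fun a => ordOf_lt a.1)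
    set σ := ⨆ a : {i : κ.ord.ToType // ∃ δ, P δ ∧ ordOf i = (ΞΗ δ).1}, ordOf a.1 with hσ
    have hσ1 : σ + 1 < κ.ord := by
      rw [Ordinal.add_one_eq_succ]
      exact (Cardinal.isSuccLimit_ord hreg.aleph0_le).succ_lt hsup
    obtain ⟨δ, hδC, hδge, hδnc⟩ := hcon (σ + 1) hσ1
    have hPδ : P δ := ⟨hδC, hδnc⟩
    have hle := Ordinal.le_iSup
      (fun a : {i : κ.ord.ToType // ∃ δ, P δ ∧ ordOf i = (ΞΗ δ).1} => ordOf a.1)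
      ⟨(Ordinal.ToType.mk (o := κ.ord)) ⟨(ΞΗ δ).1, hΞlt δ hPδ⟩, ⟨δ, hPδ, ordOf_idx _⟩⟩
    have hle2 : (ΞΗ δ).1 ≤ σ := by simpa only [ordOf_idx] using hle
    have hfinal : σ + 1 ≤ σ := le_trans hδge (le_trans (hΞΗ δ hPδ).1 hle2)
    have h2 : σ < σ + 1 := by
      rw [Ordinal.add_one_eq_succ]
      exact Order.lt_succ σ
    exact absurd (lt_of_lt_of_le h2 hfinal) (lt_irrefl σ)
  · rintro ⟨ε, hε, hconst⟩ x hx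
    obtain ⟨hε'C, hεε'⟩ := hsucc ε hε
    set ε' := clubSucc C ε with hε'def
    have hε'lt : ε' < κ.ord := hC.1 hε'C
    refine ⟨Set.range (Tmap κ.ord ε'), ?_, ?_⟩
    · have hι' : Cardinal.mk {i : κ.ord.ToType // ordOf i < ε'} < κ := by
        have hinj2 : Function.Injective
            (fun i : {i : κ.ord.ToType // ordOf i < ε'} =>
              (Ordinal.ToType.mk (o := ε')) ⟨ordOf i.1, i.2⟩) := by
          intro a b hab
          have h2 := congrArg (fun z => (((Ordinal.ToType.mk (o := ε').symm)) z : Ordinal)) hab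
          simp only [OrderIso.symm_apply_apply] at h2
          exact Subtype.ext (ordOf_inj h2)
        calc Cardinal.mk {i : κ.ord.ToType // ordOf i < ε'}
            ≤ Cardinal.mk ε'.ToType := Cardinal.mk_le_of_injective hinj2
          _ = ε'.card := Cardinal.mk_toType ε'
          _ < κ := Cardinal.lt_ord.1 hε'lt
      calc Cardinal.mk (Set.range (Tmap κ.ord ε'))
          ≤ Cardinal.mk (List ({i : κ.ord.ToType // ordOf i < ε'} × ℚ × ℚ)) :=
            Cardinal.mk_range_le
        _ ≤ max Cardinal.aleph0 (Cardinal.mk ({i : κ.ord.ToType // ordOf i < ε'} × ℚ × ℚ)) :=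
            Cardinal.mk_list_le_max _
        _ < κ := by
            refine max_lt hunc ?_
            have h1 : Cardinal.mk ({i : κ.ord.ToType // ordOf i < ε'} × ℚ × ℚ)
                = Cardinal.mk {i : κ.ord.ToType // ordOf i < ε'} * Cardinal.mk (ℚ × ℚ) := by
              simpa using Cardinal.mk_prod {i : κ.ord.ToType // ordOf i < ε'} (ℚ × ℚ)
            rw [h1]
            exact Cardinal.mul_lt_of_lt (le_of_lt hunc) hι'
              (lt_of_le_of_lt Cardinal.mk_le_aleph0 hunc)
    · rintro y ⟨w, rfl⟩
      refine dense_small ε' _ ?_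
      intro i hi
      set β := ordOf i with hβdef
      have hβκ : β < κ.ord := ordOf_lt i
      have hβε' : ε' ≤ β := not_lt.1 hi
      have hsne : (C ∩ Set.Iic β).Nonempty := ⟨ε', hε'C, hβε'⟩
      have hbdd : BddAbove (C ∩ Set.Iic β) := ⟨β, fun b hb => hb.2⟩
      set δ := sSup (C ∩ Set.Iic β) with hδdef
      have hδβ : δ ≤ β := csSup_le hsne (fun b hb => hb.2)
      have hδC : δ ∈ C := hC.2.1 _ Set.inter_subset_left hsne (lt_of_le_of_lt hδβ hβκ)
      have hε'δ : ε' ≤ δ := le_csSup hbdd ⟨hε'C, hβε'⟩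
      have hεδ : ε ≤ δ := le_trans (le_of_lt hεε') hε'δ
      obtain ⟨hγC, hδγ⟩ := hsucc δ (hC.1 hδC)
      set γ := clubSucc C δ with hγdef
      have hβγ : β < γ := by
        by_contra hcon2
        push_neg at hcon2
        exact absurd hδγ (not_lt.2 (le_csSup hbdd ⟨hγC, hcon2⟩))
      have hEzero : ∀ j : κ.ord.ToType,
          ((u * x * star u - v * x * star v) (Evec κ.ord j)) i = 0 := by
        intro j
        rw [d_apply_E hu hv]
        rcases lt_or_ge (ordOf j) δ with hζ | hζ
        · have h0 : (x (Evec κ.ord j)) i = 0 := by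
            refine (hx δ hδC).1 (Evec κ.ord j) ?_ i ?_
            · intro m hm
              rw [Evec_apply, if_neg]
              intro hmj
              subst hmj
              exact hm (Set.mem_Iio.2 hζ)
            · rw [Set.mem_Iio]
              exact not_lt.2 hδβ
          rw [h0, mul_zero]
        · rcases lt_or_ge (ordOf j) γ with hζ2 | hζ2
          · have hcc := hconst δ hδC hεδ β (ordOf j) hδβ hβγ hζ hζ2
            have hcc' : f β * (starRingEnd ℂ) (g β)
                = f (ordOf j) * (starRingEnd ℂ) (g (ordOf j)) := by
              simpa only [Complex.star_def] using hcc
            have hmul : f β * (starRingEnd ℂ) (f (ordOf j))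
                - g β * (starRingEnd ℂ) (g (ordOf j)) = 0 := by
              rw [sub_eq_zero]
              exact unit_cross (hf β) (hf (ordOf j)) (hg β) (hg (ordOf j)) hcc'
            rw [hmul, zero_mul]
          · have h0 : (starRingEnd ℂ) ((x (Evec κ.ord j)) i) = 0 := by
              rw [← star_apply_E]
              refine (hx γ hγC).2 (Evec κ.ord i) ?_ j ?_
              · intro m hm
                rw [Evec_apply, if_neg]
                intro hmi
                subst hmi
                exact hm (Set.mem_Iio.2 hβγ)
              · rw [Set.mem_Iio]
                exact not_lt.2 hζ2
            have h0' : (x (Evec κ.ord j)) i = 0 := by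
              have h3 := congrArg (starRingEnd ℂ) h0
              simpa using h3
            rw [h0', mul_zero]
      have hsumw := lp.hasSum_single (E := fun _ : κ.ord.ToType => ℂ) ENNReal.ofNat_ne_top w
      have hL := hsumw.mapL ((coordL κ.ord i).comp (u * x * star u - v * x * star v))
      have hzero : ∀ j, ((coordL κ.ord i).comp (u * x * star u - v * x * star v))
          (lp.single 2 j (w j)) = 0 := by
        intro j
        rw [single_eq_smul, map_smul, smul_eq_mul]
        have h4 : ((coordL κ.ord i).comp (u * x * star u - v * x * star v))
            (Evec κ.ord j) = 0 := hEzero j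
        rw [h4, mul_zero]
      simp only [hzero] at hL
      exact hL.unique hasSum_zero
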